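/- If X is an e-open compact metrizable space, then every path component of X is open; in particular, X is locally path-connected. -/

import Mathlib

open Set Filter

/-- A map `f : Z → X` on a closed subspace `Z` of `Y` extends to a continuous map on `Y`. -/
def ExtendsTo {X Y : Type*} [TopologicalSpace X] [TopologicalSpace Y]
    (Z : Set Y) (f : C(Z, X)) : Prop :=
  ∃ g : C(Y, X), ∀ z : Z, g z.1 = f z

/-- `X` is e-open: for every compact metrizable `Y` and closed `Z ⊆ Y`, the set of maps
`Z → X` extending to `Y` is open in `C(Z, X)` (compact-open = uniform convergence topology). -/
def EOpen (X : Type*) [TopologicalSpace X] : Prop :=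
  ∀ (Y : Type) [MetricSpace Y] [CompactSpace Y] (Z : Set Y), IsClosed Z →
    IsOpen {f : C(Z, X) | ExtendsTo Z f}

namespace EOpenAux
open Metric Topology

def SS : Set ℝ := insert 0 (Set.range fun n : ℕ => (1:ℝ)/(n+1))
lemma isCompact_SS : IsCompact SS :=
  tendsto_one_div_add_atTop_nhds_zero_nat.isCompact_insert_range
instance : CompactSpace SS := isCompact_iff_compactSpace.mp isCompact_SS
noncomputable def s0 : SS := ⟨0, Set.mem_insert _ _⟩
noncomputable def sN (n : ℕ) : SS := ⟨(1:ℝ)/(n+1), Set.mem_insert_of_mem _ ⟨n, rfl⟩⟩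
def ZZ : Set (SS × unitInterval) := {q | (q.1 : ℝ) = 0 ∨ q.2 = 0 ∨ q.2 = 1}
lemma isClosed_ZZ : IsClosed ZZ := by
  have h1 : IsClosed {q : SS × unitInterval | (q.1 : ℝ) = 0} :=
    isClosed_eq (continuous_subtype_val.comp continuous_fst) continuous_const
  have h2 : IsClosed {q : SS × unitInterval | q.2 = 0} :=
    isClosed_eq continuous_snd continuous_const
  have h3 : IsClosed {q : SS × unitInterval | q.2 = 1} :=
    isClosed_eq continuous_snd continuous_const
  have : ZZ = {q : SS × unitInterval | (q.1 : ℝ) = 0} ∪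
      ({q : SS × unitInterval | q.2 = 0} ∪ {q : SS × unitInterval | q.2 = 1}) := by
    ext q; simp [ZZ]
  rw [this]; exact h1.union (h2.union h3)
instance : CompactSpace ZZ := isCompact_iff_compactSpace.mp (isClosed_ZZ.isCompact)

lemma gap {m n : ℕ} (h : m ≠ n) :
    1/(((n:ℝ)+1)*((n:ℝ)+2)) ≤ |1/((m:ℝ)+1) - 1/((n:ℝ)+1)| := by
  have hm : (0:ℝ) < (m:ℝ) + 1 := by positivity
  have hn : (0:ℝ) < (n:ℝ) + 1 := by positivity
  have hn2 : (0:ℝ) < (n:ℝ) + 2 := by positivity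
  rcases lt_or_gt_of_ne h with hlt | hgt
  · have hmn : (m:ℝ) + 1 ≤ (n:ℝ) := by exact_mod_cast hlt
    have hnpos : (0:ℝ) < (n:ℝ) := lt_of_lt_of_le hm hmn
    have h1 : 1/((n:ℝ)) ≤ 1/((m:ℝ)+1) := one_div_le_one_div_of_le hm hmn
    have key : 1/(((n:ℝ)+1)*((n:ℝ)+2)) ≤ 1/((m:ℝ)+1) - 1/((n:ℝ)+1) := by
      have : 1/(((n:ℝ)+1)*((n:ℝ)+2)) ≤ 1/(n:ℝ) - 1/((n:ℝ)+1) := by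
        rw [div_sub_div _ _ (ne_of_gt hnpos) (ne_of_gt hn),
          div_le_div_iff₀ (by positivity) (by positivity)]
        nlinarith [hnpos]
      linarith
    exact key.trans (le_abs_self _)
  · have hmn : (n:ℝ) + 2 ≤ (m:ℝ) + 1 := by
      have h' : (n:ℕ) + 1 ≤ m := hgt
      have : ((n:ℝ)) + 1 ≤ (m:ℝ) := by exact_mod_cast h'
      linarith
    have h1 : 1/((m:ℝ)+1) ≤ 1/((n:ℝ)+2) := one_div_le_one_div_of_le hn2 hmn
    have key : 1/(((n:ℝ)+1)*((n:ℝ)+2)) ≤ 1/((n:ℝ)+1) - 1/((m:ℝ)+1) := by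
      have : 1/((n:ℝ)+1) - 1/((n:ℝ)+2) = 1/(((n:ℝ)+1)*((n:ℝ)+2)) := by
        field_simp; ring
      linarith
    calc 1/(((n:ℝ)+1)*((n:ℝ)+2)) ≤ 1/((n:ℝ)+1) - 1/((m:ℝ)+1) := key
      _ ≤ |1/((m:ℝ)+1) - 1/((n:ℝ)+1)| := by rw [abs_sub_comm]; exact le_abs_self _

variable {X : Type*} [MetricSpace X]

noncomputable def comb (p : X) (u v : ℕ → X) (q : SS × unitInterval) : X :=
  if (q.1 : ℝ) = 0 then p else if q.2 = 0 then u (⌊1/(q.1:ℝ)⌋₊ - 1) else v (⌊1/(q.1:ℝ)⌋₊ - 1)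

lemma idx_eq (n : ℕ) : ⌊(1:ℝ)/((1:ℝ)/(n+1))⌋₊ - 1 = n := by
  rw [one_div_one_div]
  have : ((n:ℝ) + 1) = ((n + 1 : ℕ) : ℝ) := by push_cast; ring
  rw [this, Nat.floor_natCast]; omega

omit [MetricSpace X] in
lemma comb_apply (p : X) (u v : ℕ → X) (n : ℕ) (h : (1:ℝ)/(n+1) ∈ SS) (t : unitInterval) :
    comb p u v (⟨(1:ℝ)/(n+1), h⟩, t) = if t = 0 then u n else v n := by
  have h1 : (1:ℝ)/(n+1) ≠ 0 := by positivity
  have h2 : ⌊(1:ℝ)/((1:ℝ)/(n+1))⌋₊ - 1 = n := idx_eq n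
  rw [comb, if_neg h1]
  by_cases ht : t = 0 <;> simp only [ht, if_true, if_false, h2, ite_true, ite_false]

omit [MetricSpace X] in
lemma comb_zero (p : X) (u v : ℕ → X) (h : (0:ℝ) ∈ SS) (t : unitInterval) :
    comb p u v (⟨0, h⟩, t) = p := if_pos rfl

lemma continuous_comb (p : X) (u v : ℕ → X) (hu : Tendsto u atTop (𝓝 p))
    (hv : Tendsto v atTop (𝓝 p)) : Continuous (fun z : ZZ => comb p u v z) := by
  rw [Metric.continuous_iff]
  rintro ⟨⟨⟨s, hs⟩, t⟩, hzZ⟩ ε hε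
  have hdist : ∀ (z' : ZZ), dist z' (⟨(⟨s, hs⟩, t), hzZ⟩ : ZZ)
      = max |((z'.1.1 : ℝ)) - s| |((z'.1.2 : ℝ)) - (t:ℝ)| := by
    intro z'
    rw [Subtype.dist_eq, Prod.dist_eq, Subtype.dist_eq, Subtype.dist_eq,
      Real.dist_eq, Real.dist_eq]
  rcases Set.mem_insert_iff.mp hs with h0 | ⟨n, hn⟩
  · -- limit point : s = 0
    subst h0
    obtain ⟨N, hN⟩ := Metric.tendsto_atTop.mp hu ε hε
    obtain ⟨N', hN'⟩ := Metric.tendsto_atTop.mp hv ε hε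
    refine ⟨1/(((max N N' : ℕ) : ℝ)+1), by positivity, ?_⟩
    rintro ⟨⟨⟨s', hs'⟩, t'⟩, hz'Z⟩ hd
    rw [hdist] at hd
    have hds : |s' - 0| < 1/(((max N N' : ℕ):ℝ)+1) :=
      lt_of_le_of_lt (le_max_left _ _) hd
    show dist (comb p u v (⟨s', hs'⟩, t')) (comb p u v (⟨(0:ℝ), hs⟩, t)) < ε
    rw [comb_zero]
    rcases Set.mem_insert_iff.mp hs' with h0' | ⟨m, hm⟩
    · subst h0'
      rw [comb_zero, dist_self]; exact hε
    · subst hm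
      have hsmall : (1:ℝ)/((m:ℝ)+1) < 1/(((max N N' : ℕ):ℝ)+1) := by
        have : |(1:ℝ)/((m:ℝ)+1) - 0| = 1/((m:ℝ)+1) := by
          rw [sub_zero, abs_of_pos (by positivity)]
        rw [this] at hds; exact hds
      have hmN : max N N' ≤ m := by
        have h2 : ((max N N' : ℕ):ℝ) + 1 < (m:ℝ) + 1 :=
          lt_of_one_div_lt_one_div (by positivity) hsmall
        have : ((max N N' : ℕ):ℝ) < (m:ℝ) := by linarith
        exact_mod_cast this.le
      rw [comb_apply]
      by_cases ht' : t' = 0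
      · rw [if_pos ht']; exact hN m (le_trans (le_max_left _ _) hmN)
      · rw [if_neg ht']; exact hN' m (le_trans (le_max_right _ _) hmN)
  · -- isolated point : s = 1/(n+1)
    subst hn
    refine ⟨1/(((n:ℝ)+1)*((n:ℝ)+2)), by positivity, ?_⟩
    rintro ⟨⟨⟨s', hs'⟩, t'⟩, hz'Z⟩ hd
    rw [hdist] at hd
    have hds : |s' - 1/((n:ℝ)+1)| < 1/(((n:ℝ)+1)*((n:ℝ)+2)) :=
      lt_of_le_of_lt (le_max_left _ _) hd
    have hdt : |(t':ℝ) - (t:ℝ)| < 1/(((n:ℝ)+1)*((n:ℝ)+2)) :=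
      lt_of_le_of_lt (le_max_right _ _) hd
    have hs'eq : s' = 1/((n:ℝ)+1) := by
      rcases Set.mem_insert_iff.mp hs' with h0' | ⟨m, hm⟩
      · exfalso
        subst h0'
        have h1 : |(0:ℝ) - 1/((n:ℝ)+1)| = 1/((n:ℝ)+1) := by
          rw [zero_sub, abs_neg, abs_of_pos (by positivity)]
        have h2 : 1/(((n:ℝ)+1)*((n:ℝ)+2)) ≤ 1/((n:ℝ)+1) :=
          one_div_le_one_div_of_le (by positivity) (by nlinarith)
        rw [h1] at hds; linarith
      · subst hm
        by_cases hmn : m = n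
        · subst hmn; rfl
        · exact absurd hds (not_lt.mpr (gap hmn))
    have hsne : (1:ℝ)/((n:ℝ)+1) ≠ 0 := by positivity
    have htt : t = 0 ∨ t = 1 := by
      rcases hzZ with h | h
      · exact absurd h hsne
      · exact h
    have htt' : t' = 0 ∨ t' = 1 := by
      rcases hz'Z with h | h
      · exact absurd (hs'eq ▸ h) hsne
      · exact h
    have hhalf : 1/(((n:ℝ)+1)*((n:ℝ)+2)) ≤ 1/2 :=
      one_div_le_one_div_of_le two_pos (by nlinarith)
    have ht'eq : t' = t := by
      rcases htt with rfl | rfl <;> rcases htt' with rfl | rfl <;>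
        first
          | rfl
          | (exfalso
             simp only [Set.Icc.coe_zero, Set.Icc.coe_one, zero_sub, sub_zero,
               abs_neg, abs_one] at hdt
             linarith)
    have hpt : ((⟨s', hs'⟩, t') : SS × unitInterval) = (⟨(1:ℝ)/((n:ℝ)+1), hs⟩, t) :=
      Prod.ext (Subtype.ext hs'eq) ht'eq
    show dist (comb p u v (⟨s', hs'⟩, t')) (comb p u v (⟨(1:ℝ)/((n:ℝ)+1), hs⟩, t)) < ε
    rw [hpt, dist_self]; exact hε


lemma key (hX : EOpen X) (p : X) {ε : ℝ} (hε : 0 < ε) :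
    ∃ δ > 0, ∀ a b : X, dist a p < δ → dist b p < δ → JoinedIn (Metric.ball p ε) a b := by
  classical
  have hopen := hX (SS × unitInterval) ZZ isClosed_ZZ
  have hc : (ContinuousMap.const ZZ p) ∈ {f : C(ZZ, X) | ExtendsTo ZZ f} :=
    ⟨ContinuousMap.const _ p, fun z => rfl⟩
  obtain ⟨δ0, hδ0, hball⟩ := Metric.isOpen_iff.mp hopen _ hc
  by_contra hcon
  push_neg at hcon
  choose a b ha hb hj using fun n : ℕ =>
    hcon (min δ0 (1/((n:ℝ)+1))) (lt_min hδ0 (by positivity))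
  -- the sequences converge to p
  have hconv : ∀ (w : ℕ → X), (∀ n, dist (w n) p < min δ0 (1/((n:ℝ)+1))) →
      Tendsto w atTop (𝓝 p) := by
    intro w hw
    rw [Metric.tendsto_atTop]
    intro ε' hε'
    obtain ⟨N, hN⟩ := exists_nat_one_div_lt hε'
    refine ⟨N, fun n hn => ?_⟩
    have h1 : (1:ℝ)/((n:ℝ)+1) ≤ 1/((N:ℝ)+1) :=
      one_div_le_one_div_of_le (by positivity) (by exact_mod_cast by linarith [hn] : ((N:ℝ)+1) ≤ (n:ℝ)+1)
    calc dist (w n) p < min δ0 (1/((n:ℝ)+1)) := hw n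
      _ ≤ 1/((n:ℝ)+1) := min_le_right _ _
      _ ≤ 1/((N:ℝ)+1) := h1
      _ < ε' := hN
  have hua : Tendsto a atTop (𝓝 p) := hconv a ha
  have hvb : Tendsto b atTop (𝓝 p) := hconv b hb
  -- the comb map
  set H : C(ZZ, X) := ⟨fun z => comb p a b z, continuous_comb p a b hua hvb⟩ with hH
  have hHclose : H ∈ Metric.ball (ContinuousMap.const ZZ p) δ0 := by
    rw [Metric.mem_ball, ContinuousMap.dist_lt_iff hδ0]
    rintro ⟨⟨⟨s, hs⟩, t⟩, hzZ⟩
    show dist (comb p a b (⟨s, hs⟩, t)) p < δ0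
    rcases Set.mem_insert_iff.mp hs with h0 | ⟨m, hm⟩
    · subst h0; rw [comb_zero, dist_self]; exact hδ0
    · subst hm
      rw [comb_apply]
      by_cases ht : t = 0
      · rw [if_pos ht]; exact lt_of_lt_of_le (ha m) (min_le_left _ _)
      · rw [if_neg ht]; exact lt_of_lt_of_le (hb m) (min_le_left _ _)
  obtain ⟨G, hG⟩ := hball hHclose
  -- uniform continuity of the extension
  have hGu : UniformContinuous ⇑G := CompactSpace.uniformContinuous_of_continuous G.continuous
  obtain ⟨δ1, hδ1, hG1⟩ := Metric.uniformContinuous_iff.mp hGu ε hε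
  obtain ⟨N1, hN1⟩ := exists_nat_one_div_lt hδ1
  -- the path from a N1 to b N1
  have hmem0 : ∀ t : unitInterval, ((s0, t) : SS × unitInterval) ∈ ZZ := fun t => Or.inl rfl
  have hGs0 : ∀ t : unitInterval, G (s0, t) = p := by
    intro t
    have := hG ⟨(s0, t), hmem0 t⟩
    rw [this]
    show comb p a b (s0, t) = p
    exact comb_zero p a b _ t
  have hclose : ∀ t : unitInterval, dist (G (sN N1, t)) p < ε := by
    intro t
    have hd : dist ((sN N1, t) : SS × unitInterval) (s0, t) < δ1 := by
      rw [Prod.dist_eq, Subtype.dist_eq, Subtype.dist_eq, Real.dist_eq]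
      apply max_lt
      · show |(1:ℝ)/((N1:ℝ)+1) - 0| < δ1
        rw [sub_zero, abs_of_pos (by positivity)]; exact hN1
      · show dist (t:ℝ) (t:ℝ) < δ1
        rw [dist_self]; exact hδ1
    have := hG1 hd
    rwa [hGs0 t] at this
  have hmemN : ∀ t : unitInterval, t = 0 ∨ t = 1 → ((sN N1, t) : SS × unitInterval) ∈ ZZ :=
    fun t ht => Or.inr ht
  have hval : ∀ (t : unitInterval) (ht : t = 0 ∨ t = 1),
      G (sN N1, t) = if t = 0 then a N1 else b N1 := by
    intro t ht
    have := hG ⟨(sN N1, t), hmemN t ht⟩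
    rw [this]
    exact comb_apply p a b N1 _ t
  have hsrc : G (sN N1, 0) = a N1 := by rw [hval 0 (Or.inl rfl), if_pos rfl]
  have htgt : G (sN N1, 1) = b N1 := by
    rw [hval 1 (Or.inr rfl), if_neg]
    intro h
    have := congrArg (Subtype.val) h
    norm_num at this
  refine hj N1 ?_
  refine ⟨⟨⟨fun t => G (sN N1, t), G.continuous.comp (Continuous.prodMk_right _)⟩, hsrc, htgt⟩, ?_⟩
  intro t
  exact Metric.mem_ball.mpr (hclose t)

end EOpenAux


open EOpenAux in
/-- If `X` is e-open then its path components are open; in particular `X` is locally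
path-connected. -/
theorem eOpen_pathComponents_open {X : Type*} [MetricSpace X] [CompactSpace X]
    (hX : EOpen X) :
    (∀ x : X, IsOpen (pathComponent x)) ∧ LocPathConnectedSpace X := by
  have hloc : LocPathConnectedSpace X := by
    show LocallyPathConnectedSpace X
    rw [locPathConnectedSpace_iff_pathComponentIn_mem_nhds]
    intro x u hu hxu
    obtain ⟨ε, hε, hball⟩ := Metric.isOpen_iff.mp hu x hxu
    obtain ⟨δ, hδ, hkey⟩ := key hX x hε
    refine Filter.mem_of_superset (Metric.ball_mem_nhds x hδ) ?_
    intro y hy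
    have hxx : dist x x < δ := by rw [dist_self]; exact hδ
    exact ((hkey x y hxx (Metric.mem_ball.mp hy)).mono hball)
  exact ⟨fun x => (haveI : LocallyPathConnectedSpace X := hloc; IsOpen.pathComponent x), hloc⟩
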